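/- For every integer p ≥ 2 and every complex z with |z| < R_p, the series F_p(z) := Σ_{n≥0} binom(pn, n) z^n converges, p − (p−1)·T_p(z) ≠ 0, 1 − p·z·T_p(z)^{p−1} ≠ 0, and F_p(z) = (p−1)·z·T_p'(z) + T_p(z) = T_p(z)/(p − (p−1)·T_p(z)) = 1/(1 − p·z·T_p(z)^{p−1}). -/

import Mathlib

/-- The Fuss–Catalan numbers of order `p`: `C_n^{(p)} = binom(pn, n) / ((p-1)n + 1)`. -/
noncomputable def fussCatalan (p n : ℕ) : ℂ :=
  ((p * n).choose n : ℂ) / (((p - 1) * n + 1 : ℕ) : ℂ)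

/-- `R_p = (p-1)^(p-1) / p^p`. -/
noncomputable def Rp (p : ℕ) : ℝ :=
  ((p - 1 : ℕ) : ℝ) ^ (p - 1) / (p : ℝ) ^ p

/-- `T_p(z) = Σ_{n ≥ 0} C_n^{(p)} z^n`. -/
noncomputable def Tp (p : ℕ) (z : ℂ) : ℂ :=
  ∑' n : ℕ, fussCatalan p n * z ^ n

/-- For `p ≥ 2` and `|z| < R_p`, the series `F_p(z) = Σ_{n ≥ 0} binom(pn,n) z^n`
converges, `p − (p−1) T_p(z) ≠ 0`, `1 − p z T_p(z)^{p−1} ≠ 0`, and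
`F_p(z) = (p−1) z T_p'(z) + T_p(z) = T_p(z)/(p − (p−1) T_p(z)) = 1/(1 − p z T_p(z)^{p−1})`. -/

noncomputable def Fr (q : ℕ) : ℕ → ℕ → ℝ
  | 0, n => if n = 0 then 1 else 0
  | m+1, n => (m+1 : ℝ) * (((q+2)*n+m).choose n : ℝ) / ((q+1)*n+m+1 : ℝ)

lemma fr_succ_def (q m n : ℕ) :
    Fr q (m+1) n = (m+1 : ℝ) * (((q+2)*n+m).choose n : ℝ) / ((q+1)*n+m+1 : ℝ) := rfl

lemma fr_pascal (q m n : ℕ) :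
    Fr q (m+1) (n+1) = Fr q m (n+1) + Fr q (m+(q+2)) n := by
  have hm : m + (q+2) = (m+q+1)+1 := by omega
  rw [hm]
  cases m with
  | zero =>
    have hF0 : Fr q 0 (n+1) = 0 := by simp [Fr]
    rw [fr_succ_def q 0 (n+1), fr_succ_def q (0+q+1) n, hF0, zero_add]
    have e1 : (q+2)*(n+1)+0 = ((q+2)*n+(q+1))+1 := by ring
    have e2 : (q+2)*n+(0+q+1) = (q+2)*n+(q+1) := by ring
    rw [e1, e2]
    have h1 := congrArg (Nat.cast : ℕ → ℝ) (Nat.add_one_mul_choose_eq ((q+2)*n+(q+1)) n)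
    push_cast at h1
    have hn1 : ((n:ℝ)+1) ≠ 0 := by positivity
    have key2 : ((((q+2)*n+(q+1))+1).choose (n+1) : ℝ)
        = ((q:ℝ)+2) * ((((q+2)*n+(q+1))).choose n : ℝ) :=
      mul_right_cancel₀ hn1 (by push_cast; linear_combination -h1)
    push_cast
    rw [key2]
    rw [div_eq_div_iff (by positivity) (by positivity)]
    ring
  | succ m =>
    rw [fr_succ_def q (m+1) (n+1), fr_succ_def q m (n+1), fr_succ_def q (m+1+q+1) n]
    have hM2 : (q+2)*n+(m+1+q+1) = (q+2)*(n+1)+m := by ring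
    have hM3 : (q+2)*(n+1)+(m+1) = ((q+2)*(n+1)+m)+1 := by ring
    rw [hM2, hM3]
    have hA := congrArg (Nat.cast : ℕ → ℝ) (Nat.choose_succ_succ ((q+2)*(n+1)+m) n)
    simp only [Nat.succ_eq_add_one] at hA
    push_cast at hA
    have hsub : (q+2)*(n+1)+m = n + ((q+1)*n+q+m+2) := by ring
    have hB := congrArg (Nat.cast : ℕ → ℝ) (Nat.choose_succ_right_eq ((q+2)*(n+1)+m) n)
    rw [hsub, Nat.add_sub_cancel_left, ← hsub] at hB
    push_cast at hB
    push_cast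
    rw [div_add_div _ _ (by positivity : ((q:ℝ)+1)*((n:ℝ)+1)+(m:ℝ)+1 ≠ 0)
      (by positivity : ((q:ℝ)+1)*(n:ℝ)+((m:ℝ)+1+(q:ℝ)+1)+1 ≠ 0),
      div_eq_div_iff (by positivity) (by positivity)]
    linear_combination (((m:ℝ)+2)*(((q:ℝ)+1)*((n:ℝ)+1)+(m:ℝ)+1)*(((q:ℝ)+1)*(n:ℝ)+(m:ℝ)+(q:ℝ)+3))*hA
      + (((q:ℝ)+1)*(((q:ℝ)+1)*(n:ℝ)+(m:ℝ)+(q:ℝ)+3))*hB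

lemma fr_zero_right (q m : ℕ) : Fr q m 0 = 1 := by
  cases m with
  | zero => simp [Fr]
  | succ m =>
    rw [fr_succ_def]
    have h : ((q:ℝ)+1) * 0 + m + 1 ≠ 0 := by positivity
    push_cast
    field_simp
    simp

lemma fr_nonneg (q m n : ℕ) : 0 ≤ Fr q m n := by
  cases m with
  | zero => dsimp [Fr]; split <;> norm_num
  | succ m => rw [fr_succ_def]; positivity

lemma fr_one_succ (q n : ℕ) : Fr q 1 (n+1) = Fr q (q+2) n := by
  have h := fr_pascal q 0 n
  have h0 : Fr q 0 (n+1) = 0 := by simp [Fr]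
  rw [h0, zero_add] at h
  simpa using h

lemma fr_conv (q m n : ℕ) :
    ∑ k ∈ Finset.range (n+1), Fr q 1 k * Fr q m (n-k) = Fr q (m+1) n := by
  induction n generalizing m with
  | zero => simp [fr_zero_right]
  | succ n ih =>
    induction m with
    | zero =>
      rw [Finset.sum_eq_single (n+1)]
      · simp [fr_zero_right]
      · intro k hk hkne
        have hk' : k < n+2 := Finset.mem_range.mp hk
        have : n+1-k ≠ 0 := by omega
        have h0 : Fr q 0 (n+1-k) = 0 := by simp [Fr, this]
        rw [h0, mul_zero]
      · intro h
        exact absurd (Finset.self_mem_range_succ (n+1)) h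
    | succ m ihm =>
      have hsplit : ∀ k ∈ Finset.range (n+1),
          Fr q 1 k * Fr q (m+1) (n+1-k)
            = Fr q 1 k * Fr q m (n+1-k) + Fr q 1 k * Fr q (m+(q+2)) (n-k) := by
        intro k hk
        have hk' : k ≤ n := Nat.lt_succ_iff.mp (Finset.mem_range.mp hk)
        have h1 : n+1-k = (n-k)+1 := by omega
        rw [h1, fr_pascal q m (n-k), ← h1, mul_add]
      rw [Finset.sum_range_succ, Finset.sum_congr rfl hsplit, Finset.sum_add_distrib]
      have hA := ihm
      rw [Finset.sum_range_succ, Nat.sub_self, fr_zero_right] at hA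
      have hB := ih (m+(q+2))
      have hp2 := fr_pascal q (m+1) n
      have he : m+1+(q+2) = m+(q+2)+1 := by omega
      rw [he] at hp2
      rw [Nat.sub_self, fr_zero_right]
      linarith [hA, hB, hp2]

lemma choose_bound (q m n : ℕ) :
    (((q+2)*n+m).choose n) * (q+1)^((q+1)*n+m) ≤ (q+2)^((q+2)*n+m) := by
  have hN : n ≤ (q+2)*n+m :=
    le_trans (Nat.le_mul_of_pos_left n (by omega)) (Nat.le_add_right _ _)
  have hsub : (q+2)*n+m - n = (q+1)*n+m := by
    have h : (q+2)*n+m = n + ((q+1)*n+m) := by ring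
    rw [h, Nat.add_sub_cancel_left]
  calc (((q+2)*n+m).choose n) * (q+1)^((q+1)*n+m)
      = 1^n * (q+1)^(((q+2)*n+m) - n) * (((q+2)*n+m).choose n) := by
        rw [one_pow, hsub]; ring
    _ ≤ ∑ k ∈ Finset.range (((q+2)*n+m)+1),
          1^k * (q+1)^(((q+2)*n+m) - k) * (((q+2)*n+m).choose k) :=
        Finset.single_le_sum
          (f := fun k => 1^k * (q+1)^(((q+2)*n+m) - k) * (((q+2)*n+m).choose k))
          (fun k _ => Nat.zero_le _)
          (Finset.mem_range.mpr (Nat.lt_succ_of_le hN))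
    _ = (1+(q+1))^((q+2)*n+m) := (add_pow 1 (q+1) _).symm
    _ = (q+2)^((q+2)*n+m) := by rw [show 1+(q+1) = q+2 from by omega]

lemma Rp_eq (q : ℕ) : Rp (q+2) = ((q:ℝ)+1)^(q+1)/((q:ℝ)+2)^(q+2) := by
  unfold Rp
  norm_num [show q+2-1 = q+1 from rfl]

lemma Rp_pos (q : ℕ) : 0 < Rp (q+2) := by
  rw [Rp_eq]; positivity

lemma fr_bound (q m n : ℕ) :
    Fr q m n * (Rp (q+2))^n ≤ ((m:ℝ)+1) * (((q:ℝ)+2)/((q:ℝ)+1))^m := by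
  have hq1 : (0:ℝ) < (q:ℝ)+1 := by positivity
  have hQ : (1:ℝ) ≤ ((q:ℝ)+2)/((q:ℝ)+1) := by
    rw [le_div_iff₀ hq1]; linarith
  cases m with
  | zero =>
    dsimp [Fr]; split
    · subst ‹n = 0›; norm_num
    · norm_num
  | succ m =>
    have hRn : (0:ℝ) < (Rp (q+2))^n := pow_pos (Rp_pos q) n
    have hB : ((((q+2)*n+m).choose n : ℕ):ℝ) * (Rp (q+2))^n
        ≤ (((q:ℝ)+2)/((q:ℝ)+1))^m := by
      have h2 : ((((q+2)*n+m).choose n : ℕ):ℝ) * (((q:ℝ)+1)^((q+1)*n+m))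
          ≤ ((q:ℝ)+2)^((q+2)*n+m) := by exact_mod_cast choose_bound q m n
      rw [Rp_eq, div_pow, ← pow_mul, ← pow_mul, mul_div_assoc',
        show (((q:ℝ)+2)/((q:ℝ)+1))^m = ((q:ℝ)+2)^m/((q:ℝ)+1)^m from div_pow _ _ m,
        div_le_div_iff₀ (by positivity) (by positivity)]
      calc ((((q+2)*n+m).choose n : ℕ):ℝ) * ((q:ℝ)+1)^((q+1)*(n)) * ((q:ℝ)+1)^m
          = ((((q+2)*n+m).choose n : ℕ):ℝ) * ((q:ℝ)+1)^((q+1)*n+m) := by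
            rw [pow_add]; ring
        _ ≤ ((q:ℝ)+2)^((q+2)*n+m) := h2
        _ = ((q:ℝ)+2)^m * ((q:ℝ)+2)^((q+2)*n) := by rw [← pow_add]; ring_nf
    have hd : (1:ℝ) ≤ ((q:ℝ)+1)*n+m+1 := by
      have : (0:ℝ) ≤ ((q:ℝ)+1)*n+m := by positivity
      linarith
    have h1 : Fr q (m+1) n ≤ ((m:ℝ)+1) * (((q+2)*n+m).choose n : ℝ) := by
      rw [fr_succ_def]
      exact div_le_self (by positivity) hd
    calc Fr q (m+1) n * (Rp (q+2))^n
        ≤ (((m:ℝ)+1) * (((q+2)*n+m).choose n : ℝ)) * (Rp (q+2))^n :=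
          mul_le_mul_of_nonneg_right h1 hRn.le
      _ = ((m:ℝ)+1) * ((((q+2)*n+m).choose n : ℝ) * (Rp (q+2))^n) := by ring
      _ ≤ ((m:ℝ)+1) * (((q:ℝ)+2)/((q:ℝ)+1))^m := by
          apply mul_le_mul_of_nonneg_left hB (by positivity)
      _ ≤ (((m+1:ℕ):ℝ)+1) * (((q:ℝ)+2)/((q:ℝ)+1))^(m+1) := by
          apply mul_le_mul
          · push_cast; linarith
          · exact pow_le_pow_right₀ hQ (Nat.le_succ m)
          · positivity
          · positivity

lemma summable_aux (q m j : ℕ) {r : ℝ} (h0 : 0 ≤ r) (hr : r < Rp (q+2)) :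
    Summable (fun n : ℕ => ((n:ℝ)+1) * Fr q m (n+j) * r^n) := by
  have hR : 0 < Rp (q+2) := Rp_pos q
  set x : ℝ := r / Rp (q+2) with hxdef
  have hx0 : 0 ≤ x := by positivity
  have hx1 : x < 1 := (div_lt_one hR).mpr hr
  have hxnorm : ‖x‖ < 1 := by rwa [Real.norm_of_nonneg hx0]
  set A : ℝ := ((m:ℝ)+1) * (((q:ℝ)+2)/((q:ℝ)+1))^m / (Rp (q+2))^j with hA
  have hsum : Summable (fun n : ℕ => A * (((n:ℝ)+1) * x^n)) := by
    apply Summable.mul_left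
    have h1 : Summable (fun n : ℕ => (n:ℝ)^1 * x^n) :=
      summable_pow_mul_geometric_of_norm_lt_one 1 hxnorm
    have h2 : Summable (fun n : ℕ => x^n) := summable_geometric_of_lt_one hx0 hx1
    simpa [add_mul, one_mul, pow_one] using h1.add h2
  apply Summable.of_nonneg_of_le _ _ hsum
  · intro n
    have := fr_nonneg q m (n+j)
    positivity
  · intro n
    have hb := fr_bound q m (n+j)
    have hrx : r^n = x^n * (Rp (q+2))^n := by
      rw [hxdef, div_pow, div_mul_cancel₀]
      positivity
    have hfr : Fr q m (n+j) * r^n ≤ A * x^n := by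
      have h1 : Fr q m (n+j) ≤ (((m:ℝ)+1) * (((q:ℝ)+2)/((q:ℝ)+1))^m) / (Rp (q+2))^(n+j) := by
        rw [le_div_iff₀ (by positivity)]
        exact hb
      calc Fr q m (n+j) * r^n
          ≤ ((((m:ℝ)+1) * (((q:ℝ)+2)/((q:ℝ)+1))^m) / (Rp (q+2))^(n+j)) * r^n := by
            apply mul_le_mul_of_nonneg_right h1 (by positivity)
        _ = A * x^n := by
            rw [hA, hxdef, div_pow, pow_add]
            have hRn' : (Rp (q+2))^n ≠ 0 := by positivity
            have hRj : (Rp (q+2))^j ≠ 0 := by positivity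
            field_simp
            rw [div_pow]
            field_simp
    calc ((n:ℝ)+1) * Fr q m (n+j) * r^n
        = ((n:ℝ)+1) * (Fr q m (n+j) * r^n) := by ring
      _ ≤ ((n:ℝ)+1) * (A * x^n) := by
          apply mul_le_mul_of_nonneg_left hfr (by positivity)
      _ = A * (((n:ℝ)+1) * x^n) := by ring

lemma summable_fr (q m : ℕ) {r : ℝ} (h0 : 0 ≤ r) (hr : r < Rp (q+2)) :
    Summable (fun n : ℕ => Fr q m n * r^n) := by
  apply Summable.of_nonneg_of_le _ _ (summable_aux q m 0 h0 hr)
  · intro n; have := fr_nonneg q m n; positivity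
  · intro n
    have h1 : 0 ≤ Fr q m n * r^n := by have := fr_nonneg q m n; positivity
    have h2 : (1:ℝ) ≤ (n:ℝ)+1 := by
      have h := Nat.cast_nonneg (α := ℝ) n; linarith
    calc Fr q m n * r^n = 1 * (Fr q m n * r^n) := by ring
      _ ≤ ((n:ℝ)+1) * (Fr q m n * r^n) := mul_le_mul_of_nonneg_right h2 h1
      _ = ((n:ℝ)+1) * Fr q m (n+0) * r^n := by norm_num; ring

lemma fussCatalan_eq (q n : ℕ) : fussCatalan (q+2) n = ((Fr q 1 n : ℝ) : ℂ) := by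
  rw [fr_succ_def]
  unfold fussCatalan
  rw [show (q+2)-1 = q+1 from rfl, show (q+2)*n+0 = (q+2)*n from rfl]
  push_cast
  norm_num

lemma summable_norm_fr (q m : ℕ) {z : ℂ} (hz : ‖z‖ < Rp (q+2)) :
    Summable (fun n : ℕ => ‖((Fr q m n : ℝ) : ℂ) * z^n‖) := by
  apply (summable_fr q m (norm_nonneg z) hz).congr
  intro n
  rw [norm_mul, norm_pow, Complex.norm_real, Real.norm_of_nonneg (fr_nonneg q m n)]

lemma tp_summable (q m : ℕ) {z : ℂ} (hz : ‖z‖ < Rp (q+2)) :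
    Summable (fun n : ℕ => ((Fr q m n : ℝ) : ℂ) * z^n) :=
  (summable_norm_fr q m hz).of_norm

lemma tp_eq (q : ℕ) (z : ℂ) : Tp (q+2) z = ∑' n : ℕ, ((Fr q 1 n : ℝ) : ℂ) * z^n :=
  tsum_congr fun n => by rw [fussCatalan_eq]

lemma tp_pow (q m : ℕ) {z : ℂ} (hz : ‖z‖ < Rp (q+2)) :
    (Tp (q+2) z)^(m+1) = ∑' n : ℕ, ((Fr q (m+1) n : ℝ) : ℂ) * z^n := by
  induction m with
  | zero => simpa using tp_eq q z
  | succ m ih =>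
    rw [pow_succ', ih, tp_eq q z,
      tsum_mul_tsum_eq_tsum_sum_antidiagonal_of_summable_norm
        (summable_norm_fr q 1 hz) (summable_norm_fr q (m+1) hz)]
    apply tsum_congr; intro n
    rw [Finset.Nat.sum_antidiagonal_eq_sum_range_succ_mk]
    have hterm : ∀ k ∈ Finset.range (n+1),
        ((Fr q 1 k:ℝ):ℂ)*z^k * (((Fr q (m+1) (n-k):ℝ):ℂ)*z^(n-k))
          = ((Fr q 1 k * Fr q (m+1) (n-k) : ℝ):ℂ) * z^n := by
      intro k hk
      have hk' : k ≤ n := Nat.lt_succ_iff.mp (Finset.mem_range.mp hk)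
      have hzp : z^k * z^(n-k) = z^n := by
        rw [← pow_add, Nat.add_sub_cancel' hk']
      push_cast
      calc ((Fr q 1 k:ℝ):ℂ)*z^k * (((Fr q (m+1) (n-k):ℝ):ℂ)*z^(n-k))
          = ((Fr q 1 k:ℝ):ℂ) * ((Fr q (m+1) (n-k):ℝ):ℂ) * (z^k * z^(n-k)) := by ring
        _ = ((Fr q 1 k:ℝ):ℂ) * ((Fr q (m+1) (n-k):ℝ):ℂ) * z^n := by rw [hzp]
    rw [Finset.sum_congr rfl hterm, ← Finset.sum_mul, ← Complex.ofReal_sum, fr_conv]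

lemma tp_funceq (q : ℕ) {z : ℂ} (hz : ‖z‖ < Rp (q+2)) :
    Tp (q+2) z = 1 + z * (Tp (q+2) z)^(q+2) := by
  have hpow := tp_pow q (q+1) hz
  rw [show (q+1)+1 = q+2 from rfl] at hpow
  rw [hpow, ← tsum_mul_left]
  have h1 : ∀ n : ℕ, z * (((Fr q (q+2) n:ℝ):ℂ) * z^n)
      = ((Fr q 1 (n+1):ℝ):ℂ) * z^(n+1) := fun n => by rw [fr_one_succ]; ring
  rw [tsum_congr h1]
  have h2 := Summable.tsum_eq_zero_add (tp_summable q 1 hz)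
  rw [tp_eq q z] at *
  rw [h2, fr_zero_right]
  norm_num

lemma tp_hasDerivAt (q : ℕ) {z : ℂ} (hz : ‖z‖ < Rp (q+2)) :
    HasDerivAt (Tp (q+2)) (∑' n : ℕ, ((Fr q 1 n : ℝ):ℂ) * ((n:ℂ) * z^(n-1))) z := by
  set r' : ℝ := (‖z‖ + Rp (q+2))/2 with hr'
  have hzr : ‖z‖ < r' := by rw [hr']; linarith
  have hrR : r' < Rp (q+2) := by rw [hr']; linarith
  have hr0 : 0 ≤ r' := le_trans (norm_nonneg z) hzr.le
  have hfun : Tp (q+2) = fun w => ∑' n : ℕ, ((Fr q 1 n : ℝ):ℂ) * w^n := funext (tp_eq q)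
  rw [hfun]
  have hU : Summable (fun n : ℕ => Fr q 1 n * ((n:ℝ) * r'^(n-1))) := by
    rw [← summable_nat_add_iff 1]
    apply (summable_aux q 1 1 hr0 hrR).congr
    intro n
    push_cast
    ring
  apply hasDerivAt_tsum_of_isPreconnected hU (Metric.isOpen_ball (x := (0:ℂ)) (ε := r'))
    (convex_ball (0:ℂ) r').isPreconnected
    (g' := fun n y => ((Fr q 1 n : ℝ):ℂ) * ((n:ℂ) * y^(n-1)))
    (fun n y _ => (hasDerivAt_pow n y).const_mul _)
    ?_ (mem_ball_zero_iff.mpr hzr) (tp_summable q 1 hz)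
    (mem_ball_zero_iff.mpr hzr)
  intro n y hy
  have hyn : ‖y‖ ≤ r' := (mem_ball_zero_iff.mp hy).le
  rw [norm_mul, Complex.norm_real, Real.norm_of_nonneg (fr_nonneg q 1 n), norm_mul,
    norm_pow, Complex.norm_natCast]
  gcongr
  exact fr_nonneg q 1 n

lemma u_zero (q : ℕ) : ∑' n : ℕ, Fr q 1 n * (0:ℝ)^n = 1 := by
  rw [tsum_eq_single 0]
  · simp [fr_zero_right]
  · intro n hn
    cases n with
    | zero => exact absurd rfl hn
    | succ n => simp [pow_succ]

lemma tp_real (q : ℕ) (s : ℝ) :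
    ((∑' n : ℕ, Fr q 1 n * s^n : ℝ) : ℂ) = Tp (q+2) ((s:ℝ):ℂ) := by
  rw [tp_eq, Complex.ofReal_tsum]
  exact tsum_congr fun n => by push_cast; ring

lemma u_lt (q : ℕ) {r : ℝ} (h0 : 0 ≤ r) (hr : r < Rp (q+2)) :
    ∑' n : ℕ, Fr q 1 n * r^n < ((q:ℝ)+2)/((q:ℝ)+1) := by
  by_contra hcon
  push_neg at hcon
  set U : ℝ → ℝ := fun s => ∑' n : ℕ, Fr q 1 n * s^n with hU
  have hcont : ContinuousOn U (Set.Icc 0 r) := by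
    have hC : ∀ s ∈ Set.Icc (0:ℝ) r, ContinuousAt (fun t : ℝ => Tp (q+2) (t:ℂ)) s := by
      intro s hs
      have hnorm : ‖((s:ℝ):ℂ)‖ < Rp (q+2) := by
        rw [Complex.norm_real, Real.norm_of_nonneg hs.1]
        exact lt_of_le_of_lt hs.2 hr
      exact ((tp_hasDerivAt q hnorm).differentiableAt.continuousAt).comp
        Complex.continuous_ofReal.continuousAt
    have hre : ContinuousOn (fun t : ℝ => (Tp (q+2) (t:ℂ)).re) (Set.Icc 0 r) :=
      Complex.continuous_re.comp_continuousOn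
        (fun s hs => (hC s hs).continuousWithinAt)
    apply hre.congr
    intro s _
    rw [hU]
    simp only
    rw [← tp_real q s, Complex.ofReal_re]
  have hU0 : U 0 = 1 := u_zero q
  have h1c : U 0 ≤ ((q:ℝ)+2)/((q:ℝ)+1) := by
    rw [hU0, le_div_iff₀ (by positivity)]
    linarith
  obtain ⟨r1, hr1mem, hr1⟩ := intermediate_value_Icc h0 hcont ⟨h1c, hcon⟩
  have hr1R : r1 < Rp (q+2) := lt_of_le_of_lt hr1mem.2 hr
  have hr10 : 0 ≤ r1 := hr1mem.1
  have hnorm : ‖((r1:ℝ):ℂ)‖ < Rp (q+2) := by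
    rw [Complex.norm_real, Real.norm_of_nonneg hr10]; exact hr1R
  have hfe := tp_funceq q hnorm
  rw [← tp_real q r1] at hfe
  have hval : (∑' n : ℕ, Fr q 1 n * r1^n : ℝ) = ((q:ℝ)+2)/((q:ℝ)+1) := hr1
  rw [hval] at hfe
  have hreal : ((q:ℝ)+2)/((q:ℝ)+1)
      = 1 + r1 * (((q:ℝ)+2)/((q:ℝ)+1))^(q+2) := by exact_mod_cast hfe
  have hkey : r1 = Rp (q+2) := by
    rw [Rp_eq, eq_div_iff (by positivity)]
    rw [div_pow] at hreal
    field_simp at hreal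
    have hcan : r1 * ((q:ℝ)+2)^(q+2) * ((q:ℝ)+1) = ((q:ℝ)+1)^(q+1) * ((q:ℝ)+1) := by
      linear_combination -hreal
    exact mul_right_cancel₀ (by positivity) hcan
  linarith [hr1mem.2]

lemma tp_sub_one (q : ℕ) {z : ℂ} (hz : ‖z‖ < Rp (q+2)) :
    ‖Tp (q+2) z - 1‖ < 1/((q:ℝ)+1) := by
  have hsum := tp_summable q 1 hz
  have h2 := Summable.tsum_eq_zero_add hsum
  have htail : Tp (q+2) z - 1 = ∑' n : ℕ, ((Fr q 1 (n+1):ℝ):ℂ) * z^(n+1) := by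
    rw [tp_eq q z, h2, fr_zero_right]
    push_cast
    ring
  have hns : Summable (fun n : ℕ => ‖((Fr q 1 (n+1):ℝ):ℂ) * z^(n+1)‖) :=
    (summable_nat_add_iff 1).mpr (summable_norm_fr q 1 hz)
  have hRsum := summable_fr q 1 (norm_nonneg z) hz
  have hR2 := Summable.tsum_eq_zero_add hRsum
  have hu := u_lt q (norm_nonneg z) hz
  rw [hR2, fr_zero_right, pow_zero, mul_one] at hu
  calc ‖Tp (q+2) z - 1‖
      ≤ ∑' n : ℕ, ‖((Fr q 1 (n+1):ℝ):ℂ) * z^(n+1)‖ := by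
        rw [htail]; exact norm_tsum_le_tsum_norm hns
    _ = ∑' n : ℕ, Fr q 1 (n+1) * ‖z‖^(n+1) := by
        apply tsum_congr; intro n
        rw [norm_mul, norm_pow, Complex.norm_real,
          Real.norm_of_nonneg (fr_nonneg q 1 (n+1))]
    _ < 1/((q:ℝ)+1) := by
        have : (1:ℝ) + ∑' n : ℕ, Fr q 1 (n+1) * ‖z‖^(n+1) < ((q:ℝ)+2)/((q:ℝ)+1) := hu
        have hc : ((q:ℝ)+2)/((q:ℝ)+1) - 1 = 1/((q:ℝ)+1) := by
          field_simp
          norm_num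
        linarith

/-- For `p ≥ 2` and `|z| < R_p`, the series `F_p(z) = Σ_{n ≥ 0} binom(pn,n) z^n`
converges, `p − (p−1) T_p(z) ≠ 0`, `1 − p z T_p(z)^{p−1} ≠ 0`, and
`F_p(z) = (p−1) z T_p'(z) + T_p(z) = T_p(z)/(p − (p−1) T_p(z)) = 1/(1 − p z T_p(z)^{p−1})`. -/
theorem fussCatalan_Fp_identities (p : ℕ) (hp : 2 ≤ p) (z : ℂ) (hz : ‖z‖ < Rp p) :
    Summable (fun n : ℕ => ((p * n).choose n : ℂ) * z ^ n) ∧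
    (p : ℂ) - ((p : ℂ) - 1) * Tp p z ≠ 0 ∧
    1 - (p : ℂ) * z * Tp p z ^ (p - 1) ≠ 0 ∧
    (∑' n : ℕ, ((p * n).choose n : ℂ) * z ^ n)
      = ((p : ℂ) - 1) * z * deriv (Tp p) z + Tp p z ∧
    (∑' n : ℕ, ((p * n).choose n : ℂ) * z ^ n)
      = Tp p z / ((p : ℂ) - ((p : ℂ) - 1) * Tp p z) ∧
    (∑' n : ℕ, ((p * n).choose n : ℂ) * z ^ n)
      = 1 / (1 - (p : ℂ) * z * Tp p z ^ (p - 1)) := by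
  obtain ⟨q, rfl⟩ : ∃ q, p = q + 2 := ⟨p - 2, by omega⟩
  have hsub : (q+2)-1 = q+1 := rfl
  simp only [hsub]
  set a := Tp (q+2) z with ha_def
  have hq1 : (0:ℝ) < (q:ℝ)+1 := by positivity
  have hzn : (0:ℝ) ≤ ‖z‖ := norm_nonneg z
  have hTb : ‖a - 1‖ < 1/((q:ℝ)+1) := tp_sub_one q hz
  have h1q : 1/((q:ℝ)+1) ≤ 1 := by
    rw [div_le_one hq1]; linarith
  have ha0 : a ≠ 0 := by
    intro h
    rw [h] at hTb
    simp only [zero_sub, norm_neg, norm_one] at hTb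
    linarith
  have h3' : ((q:ℂ)+2) - ((q:ℂ)+1)*a ≠ 0 := by
    intro h
    have he : ((q:ℂ)+1) * (a - 1) = 1 := by linear_combination -h
    have hnorm := congrArg norm he
    rw [norm_mul, norm_one] at hnorm
    have hqn : ‖((q:ℂ)+1)‖ = (q:ℝ)+1 := by
      rw [show ((q:ℂ)+1) = ((q+1:ℕ):ℂ) from by push_cast; ring, Complex.norm_natCast]
      push_cast; ring
    rw [hqn] at hnorm
    have hlt : ((q:ℝ)+1) * ‖a-1‖ < ((q:ℝ)+1) * (1/((q:ℝ)+1)) :=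
      mul_lt_mul_of_pos_left hTb hq1
    rw [mul_one_div, div_self (ne_of_gt hq1)] at hlt
    linarith [hnorm.le, hnorm.ge]
  have he1 : a = 1 + z * a^(q+2) := tp_funceq q hz
  have hD := tp_hasDerivAt q hz
  set D := ∑' n : ℕ, ((Fr q 1 n : ℝ):ℂ) * ((n:ℂ) * z^(n-1)) with hDdef
  have hDeriv : deriv (Tp (q+2)) z = D := hD.deriv
  have hev : Tp (q+2) =ᶠ[nhds z] (fun w => 1 + w * (Tp (q+2) w)^(q+2)) := by
    have hball : Metric.ball (0:ℂ) (Rp (q+2)) ∈ nhds z :=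
      Metric.isOpen_ball.mem_nhds (mem_ball_zero_iff.mpr hz)
    filter_upwards [hball] with w hw
    exact tp_funceq q (mem_ball_zero_iff.mp hw)
  have hD2 : HasDerivAt (fun w => 1 + w * (Tp (q+2) w)^(q+2))
      (a^(q+2) + z * (((q:ℂ)+2) * a^(q+1) * D)) z := by
    have h := ((hasDerivAt_id z).mul (hD.pow (q+2))).const_add 1
    simp only [hsub, id_eq, Pi.mul_apply, Pi.pow_apply, ← ha_def] at h
    refine h.congr_deriv ?_
    push_cast
    ring
  have he2 : D = a^(q+2) + z * (((q:ℂ)+2) * a^(q+1) * D) :=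
    hD.unique (hD2.congr_of_eventuallyEq hev)
  -- coefficient identity
  have hcoef : ∀ n : ℕ, (((q+2) * n).choose n : ℂ) * z^n
      = ((q:ℂ)+1)*(((Fr q 1 n:ℝ):ℂ) * (n:ℂ) * z^n) + ((Fr q 1 n:ℝ):ℂ) * z^n := by
    intro n
    have hd : ((((q+2)-1)*n+1 : ℕ):ℂ) ≠ 0 := Nat.cast_ne_zero.mpr (Nat.succ_ne_zero _)
    have hb : (((q+2) * n).choose n : ℂ) = ((((q+2)-1)*n+1 : ℕ):ℂ) * fussCatalan (q+2) n := by
      unfold fussCatalan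
      rw [mul_comm ((((q+2)-1)*n+1 : ℕ):ℂ) _, div_mul_cancel₀ _ hd]
    rw [hb, fussCatalan_eq, hsub]
    push_cast
    ring
  have hsum1 : Summable (fun n : ℕ => ((Fr q 1 n:ℝ):ℂ) * z^n) := tp_summable q 1 hz
  have hsum2 : Summable (fun n : ℕ => ((Fr q 1 n:ℝ):ℂ) * (n:ℂ) * z^n) := by
    apply Summable.of_norm
    apply Summable.of_nonneg_of_le (fun n => norm_nonneg _) _ (summable_aux q 1 0 hzn hz)
    intro n
    rw [norm_mul, norm_mul, norm_pow, Complex.norm_real, Complex.norm_natCast,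
      Real.norm_of_nonneg (fr_nonneg q 1 n)]
    have h1 : Fr q 1 n * (n:ℝ) ≤ Fr q 1 (n+0) * ((n:ℝ)+1) := by
      rw [Nat.add_zero]
      apply mul_le_mul_of_nonneg_left (by linarith) (fr_nonneg q 1 n)
    calc Fr q 1 n * (n:ℝ) * ‖z‖^n
        ≤ (Fr q 1 (n+0) * ((n:ℝ)+1)) * ‖z‖^n :=
          mul_le_mul_of_nonneg_right h1 (pow_nonneg hzn n)
      _ = ((n:ℝ)+1) * Fr q 1 (n+0) * ‖z‖^n := by ring
  have hzD : z * D = ∑' n : ℕ, ((Fr q 1 n:ℝ):ℂ) * (n:ℂ) * z^n := by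
    rw [hDdef, ← tsum_mul_left]
    apply tsum_congr
    intro n
    cases n with
    | zero => simp
    | succ n =>
      rw [show (n+1)-1 = n from rfl]
      push_cast
      ring
  have hF : (∑' n : ℕ, (((q+2) * n).choose n : ℂ) * z ^ n)
      = ((q:ℂ)+1) * (z * D) + a := by
    rw [tsum_congr hcoef, Summable.tsum_add (hsum2.mul_left _) hsum1, tsum_mul_left, hzD,
      ha_def, tp_eq q z]
  have hza : z * a^(q+1) * a = a - 1 := by linear_combination -he1
  have h4eq : 1 - ((q:ℂ)+2)*z*a^(q+1) = (((q:ℂ)+2) - ((q:ℂ)+1)*a)/a := by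
    rw [eq_div_iff ha0]
    linear_combination (-(q:ℂ)-2) * hza
  have h4 : 1 - ((q:ℂ)+2)*z*a^(q+1) ≠ 0 := by
    rw [h4eq]; exact div_ne_zero h3' ha0
  have h6 : z*D*(1 - ((q:ℂ)+2)*z*a^(q+1)) = a - 1 := by
    linear_combination z*he2 - he1
  have h7 : z*D*(((q:ℂ)+2) - ((q:ℂ)+1)*a) = (a-1)*a := by
    have h := h6
    rw [h4eq] at h
    field_simp at h
    linear_combination h
  refine ⟨?_, ?_, ?_, ?_, ?_, ?_⟩
  · exact ((hsum2.mul_left ((q:ℂ)+1)).add hsum1).congr (fun n => (hcoef n).symm)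
  · intro h
    apply h3'
    push_cast at h
    linear_combination h
  · intro h
    apply h4
    push_cast at h
    linear_combination h
  · rw [hF, hDeriv]
    push_cast
    ring
  · rw [hF]
    have hgoal : ((q:ℂ)+1) * (z * D) + a = a / (((q:ℂ)+2) - ((q:ℂ)+1)*a) := by
      rw [eq_div_iff h3']
      linear_combination ((q:ℂ)+1)*h7
    rw [hgoal]
    push_cast
    ring_nf
  · rw [hF]
    have hgoal : ((q:ℂ)+1) * (z * D) + a = 1 / (1 - ((q:ℂ)+2)*z*a^(q+1)) := by
      rw [eq_div_iff h4]
      linear_combination ((q:ℂ)+1)*h6 - ((q:ℂ)+2)*hza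
    rw [hgoal]
    push_cast
    ring_nf
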